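/- Let c₁, c₂, c₃ be three circles such that c₁ and c₂ are externally tangent at S₁, c₂ and c₃ at S₂, and c₃ and c₁ at S₃. Starting from a point P₁ on c₁, let P₂ be the second intersection of line P₁S₁ with c₂, P₃ the second intersection of line P₂S₂ with c₃, and Q the second intersection of line P₃S₃ with c₁ (passing through the tangency point when the point equals it). Then Q is the point of c₁ diametrically opposite to P₁. -/

import Mathlib

open EuclideanGeometry AffineMap

variable {E : Type*} [NormedAddCommGroup E] [InnerProductSpace ℝ E]

/-- The tangency point of two externally tangent circles lies on the segment. -/
lemma tangent_point_formula {O O' S : E} {r r' : ℝ} (hr : 0 < r) (hr' : 0 < r')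
    (hS : dist S O = r) (hS' : dist S O' = r') (htan : dist O O' = r + r') :
    S = O + (r / (r + r')) • (O' - O) := by
  have hw : Wbtw ℝ O S O' := by
    rw [← dist_add_dist_eq_iff]
    rw [dist_comm O S, hS, hS', htan]
  obtain ⟨t, ht, hSt⟩ := hw
  have hd : dist (lineMap O O' t) O = ‖t‖ * dist O O' := dist_lineMap_left O O' t
  rw [← hSt] at hS ⊢
  rw [hd, htan, Real.norm_eq_abs, abs_of_nonneg ht.1] at hS
  have hsum : r + r' ≠ 0 := by positivity
  have : t = r / (r + r') := by field_simp; linarith [hS]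
  rw [this] at hSt ⊢
  rw [lineMap_apply, vsub_eq_sub, vadd_eq_add]
  module

open RealInnerProductSpace in
/-- The second intersection with the other circle is given by the homothety of ratio -r'/r. -/
lemma step_formula {O O' S A B : E} {r r' : ℝ} (hr : 0 < r) (hr' : 0 < r')
    (hS : dist S O = r) (hS' : dist S O' = r') (htan : dist O O' = r + r')
    (hA : dist A O = r)
    (hBeq : A = S → B = S)
    (hB : A ≠ S → dist B O' = r' ∧ B ∈ line[ℝ, A, S] ∧ B ≠ S) :
    B = S - (r' / r) • (A - S) := by
  by_cases hAS : A = S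
  · rw [hBeq hAS, hAS]; simp
  obtain ⟨hBO', hBline, hBS⟩ := hB hAS
  have hSform := tangent_point_formula hr hr' hS hS' htan
  have hvne : A - S ≠ 0 := sub_ne_zero.mpr hAS
  have hc₀ne : -(r' / r) ≠ 0 := by simp only [neg_ne_zero]; positivity
  have hr0 : r ≠ 0 := ne_of_gt hr
  have hsum0 : r + r' ≠ 0 := by positivity
  -- the candidate point is on the sphere
  have hkey : -(r' / r) • (A - S) + S - O' = -(r' / r) • (A - O) := by
    rw [hSform]
    match_scalars <;> field_simp <;> ring
  have hcand : dist (-(r' / r) • (A - S) +ᵥ S) O' = dist S O' := by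
    have h1 : dist (-(r' / r) • (A - S) +ᵥ S) O' = ‖-(r' / r) • (A - O)‖ := by
      rw [dist_eq_norm, vadd_eq_add, ← hkey]
    have h2 : ‖A - O‖ = r := by rw [← dist_eq_norm]; exact hA
    rw [h1, norm_smul, hS', h2, norm_neg, Real.norm_eq_abs, abs_div,
      abs_of_pos hr', abs_of_pos hr]
    field_simp
  -- B = c • (A - S) +ᵥ S for some c ≠ 0
  have hBv : B -ᵥ S ∈ Submodule.span ℝ {A - S} := by
    have h2 := (AffineSubspace.vsub_right_mem_direction_iff_mem
      (right_mem_affineSpan_pair ℝ A S) B).mpr hBline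
    rw [direction_affineSpan, vectorSpan_pair] at h2
    simpa using h2
  obtain ⟨c, hc⟩ := Submodule.mem_span_singleton.mp hBv
  have hBc : B = c • (A - S) +ᵥ S := by rw [eq_vadd_iff_vsub_eq]; exact hc.symm
  have hcne : c ≠ 0 := by
    rintro rfl
    apply hBS
    simpa using hBc
  -- both satisfy the quadratic, so c = -(r'/r)
  have hq := (dist_smul_vadd_eq_dist (V := E) S O' hvne c).mp (by rw [← hBc, hBO', hS'])
  have hq₀ := (dist_smul_vadd_eq_dist (V := E) S O' hvne (-(r' / r))).mp hcand
  have hcc : c = -(r' / r) := by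
    rcases hq with h | h
    · exact absurd h hcne
    rcases hq₀ with h₀ | h₀
    · exact absurd h₀ hc₀ne
    rw [h, h₀]
  rw [hBc, hcc, vadd_eq_add]
  module

theorem three_cakes_diameter
    (O₁ O₂ O₃ S₁ S₂ S₃ P₁ P₂ P₃ Q : EuclideanSpace ℝ (Fin 2)) (r₁ r₂ r₃ : ℝ)
    (hr₁ : 0 < r₁) (hr₂ : 0 < r₂) (hr₃ : 0 < r₃)
    (hS₁₁ : S₁ ∈ Metric.sphere O₁ r₁) (hS₁₂ : S₁ ∈ Metric.sphere O₂ r₂)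
    (hS₂₂ : S₂ ∈ Metric.sphere O₂ r₂) (hS₂₃ : S₂ ∈ Metric.sphere O₃ r₃)
    (hS₃₃ : S₃ ∈ Metric.sphere O₃ r₃) (hS₃₁ : S₃ ∈ Metric.sphere O₁ r₁)
    (htan₁ : dist O₁ O₂ = r₁ + r₂)
    (htan₂ : dist O₂ O₃ = r₂ + r₃)
    (htan₃ : dist O₃ O₁ = r₃ + r₁)
    (hP₁ : P₁ ∈ Metric.sphere O₁ r₁)
    (hP₂eq : P₁ = S₁ → P₂ = S₁)
    (hP₂ : P₁ ≠ S₁ →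
      P₂ ∈ Metric.sphere O₂ r₂ ∧ P₂ ∈ line[ℝ, P₁, S₁] ∧ P₂ ≠ S₁)
    (hP₃eq : P₂ = S₂ → P₃ = S₂)
    (hP₃ : P₂ ≠ S₂ →
      P₃ ∈ Metric.sphere O₃ r₃ ∧ P₃ ∈ line[ℝ, P₂, S₂] ∧ P₃ ≠ S₂)
    (hQeq : P₃ = S₃ → Q = S₃)
    (hQ : P₃ ≠ S₃ →
      Q ∈ Metric.sphere O₁ r₁ ∧ Q ∈ line[ℝ, P₃, S₃] ∧ Q ≠ S₃) :
    Q = (2 : ℝ) • O₁ - P₁ := by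
  have dS₁₁ : dist S₁ O₁ = r₁ := Metric.mem_sphere.mp hS₁₁
  have dS₁₂ : dist S₁ O₂ = r₂ := Metric.mem_sphere.mp hS₁₂
  have dS₂₂ : dist S₂ O₂ = r₂ := Metric.mem_sphere.mp hS₂₂
  have dS₂₃ : dist S₂ O₃ = r₃ := Metric.mem_sphere.mp hS₂₃
  have dS₃₃ : dist S₃ O₃ = r₃ := Metric.mem_sphere.mp hS₃₃
  have dS₃₁ : dist S₃ O₁ = r₁ := Metric.mem_sphere.mp hS₃₁
  have dP₁ : dist P₁ O₁ = r₁ := Metric.mem_sphere.mp hP₁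
  -- step 1
  have h2 : P₂ = S₁ - (r₂ / r₁) • (P₁ - S₁) :=
    step_formula hr₁ hr₂ dS₁₁ dS₁₂ htan₁ dP₁ hP₂eq
      (fun h => by
        obtain ⟨hm, hl, hn⟩ := hP₂ h
        exact ⟨Metric.mem_sphere.mp hm, hl, hn⟩)
  have dP₂ : dist P₂ O₂ = r₂ := by
    by_cases h : P₁ = S₁
    · rw [hP₂eq h]; exact dS₁₂
    · exact Metric.mem_sphere.mp (hP₂ h).1
  -- step 2
  have h3 : P₃ = S₂ - (r₃ / r₂) • (P₂ - S₂) :=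
    step_formula hr₂ hr₃ dS₂₂ dS₂₃ htan₂ dP₂ hP₃eq
      (fun h => by
        obtain ⟨hm, hl, hn⟩ := hP₃ h
        exact ⟨Metric.mem_sphere.mp hm, hl, hn⟩)
  have dP₃ : dist P₃ O₃ = r₃ := by
    by_cases h : P₂ = S₂
    · rw [hP₃eq h]; exact dS₂₃
    · exact Metric.mem_sphere.mp (hP₃ h).1
  -- step 3
  have hQf : Q = S₃ - (r₁ / r₃) • (P₃ - S₃) :=
    step_formula hr₃ hr₁ dS₃₃ dS₃₁ htan₃ dP₃ hQeq
      (fun h => by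
        obtain ⟨hm, hl, hn⟩ := hQ h
        exact ⟨Metric.mem_sphere.mp hm, hl, hn⟩)
  -- tangency point formulas
  have hS1f : S₁ = O₁ + (r₁ / (r₁ + r₂)) • (O₂ - O₁) :=
    tangent_point_formula hr₁ hr₂ dS₁₁ dS₁₂ htan₁
  have hS2f : S₂ = O₂ + (r₂ / (r₂ + r₃)) • (O₃ - O₂) :=
    tangent_point_formula hr₂ hr₃ dS₂₂ dS₂₃ htan₂
  have hS3f : S₃ = O₃ + (r₃ / (r₃ + r₁)) • (O₁ - O₃) :=
    tangent_point_formula hr₃ hr₁ dS₃₃ dS₃₁ htan₃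
  have h1 : r₁ ≠ 0 := ne_of_gt hr₁
  have h2' : r₂ ≠ 0 := ne_of_gt hr₂
  have h3' : r₃ ≠ 0 := ne_of_gt hr₃
  have h12 : r₁ + r₂ ≠ 0 := by positivity
  have h23 : r₂ + r₃ ≠ 0 := by positivity
  have h31 : r₃ + r₁ ≠ 0 := by positivity
  rw [hQf, h3, h2, hS1f, hS2f, hS3f]
  match_scalars <;> field_simp <;> ring
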